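/- Let 0 < q < 1, let n be a positive integer, and let z be complex with |z| \le 1 (i.e., the case t = 0, u on the closed unit disc). Then |(q;q)_n S_n(z;q) - A_q(z)| \le \left[\frac{q^{n/2}}{1-q} + \frac{2}{1-q}\left(\frac12\right)^{\lfloor n/2 \rfloor}\right] A_q(-|z|) for all sufficiently large n. -/

import Mathlib

open Finset

/-- `(q;q)_k = ∏_{i=1}^{k}(1-q^i)` over `ℝ`. -/
noncomputable def qPochFin (q : ℝ) (k : ℕ) : ℝ := ∏ i ∈ range k, (1 - q ^ (i + 1))

/-- `(q;q)_k` as a complex number. -/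
noncomputable def qPochC (q : ℝ) (k : ℕ) : ℂ := ∏ i ∈ range k, (1 - (q : ℂ) ^ (i + 1))

/-- The Stieltjes-Wigert polynomial `S_n(z;q)`. -/
noncomputable def SW (q : ℝ) (n : ℕ) (z : ℂ) : ℂ :=
  ∑ j ∈ range (n + 1), (q : ℂ) ^ (j ^ 2) * (-z) ^ j / (qPochC q j * qPochC q (n - j))

/-- The q-Airy function `A_q(z)`. -/
noncomputable def qAiry (q : ℝ) (z : ℂ) : ℂ :=
  ∑' k : ℕ, (q : ℂ) ^ (k ^ 2) * (-z) ^ k / qPochC q k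

/-- `A_q(-x)` for real `x ≥ 0`, i.e. `∑_{k=0}^∞ q^{k²} x^k/(q;q)_k`. -/
noncomputable def qAiryNeg (q x : ℝ) : ℝ := ∑' k : ℕ, q ^ (k ^ 2) * x ^ k / qPochFin q k

section aux
variable {q : ℝ} (hq0 : 0 < q) (hq1 : q < 1)
include hq0 hq1

lemma qPochFin_pos (k : ℕ) : 0 < qPochFin q k := by
  apply Finset.prod_pos
  intro i _
  have : q ^ (i + 1) < 1 := pow_lt_one₀ hq0.le hq1 (Nat.succ_ne_zero i)
  linarith

lemma qPochFin_le_one (k : ℕ) : qPochFin q k ≤ 1 := by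
  apply Finset.prod_le_one
  · intro i _
    have : q ^ (i + 1) < 1 := pow_lt_one₀ hq0.le hq1 (Nat.succ_ne_zero i)
    linarith
  · intro i _
    have : 0 ≤ q ^ (i + 1) := by positivity
    linarith

omit hq0 hq1 in
lemma qPochC_eq (k : ℕ) : qPochC q k = ((qPochFin q k : ℝ) : ℂ) := by
  unfold qPochC qPochFin
  push_cast
  rfl

lemma qPochC_ne_zero (k : ℕ) : qPochC q k ≠ 0 := by
  rw [qPochC_eq (q := q)]
  exact_mod_cast (qPochFin_pos hq0 hq1 k).ne'

lemma abs_qPochC (k : ℕ) : ‖qPochC q k‖ = qPochFin q k := by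
  rw [qPochC_eq (q := q), Complex.norm_real, Real.norm_eq_abs, abs_of_pos (qPochFin_pos hq0 hq1 k)]

omit hq0 hq1 in
lemma weier (s : Finset ℕ) (f : ℕ → ℝ) (h0 : ∀ i ∈ s, 0 ≤ f i) (h1 : ∀ i ∈ s, f i ≤ 1) :
    1 - ∑ i ∈ s, f i ≤ ∏ i ∈ s, (1 - f i) := by
  classical
  induction s using Finset.cons_induction with
  | empty => simp
  | cons a s ha ih =>
    rw [Finset.prod_cons, Finset.sum_cons]
    have h0a := h0 a (Finset.mem_cons_self a s)
    have h1a := h1 a (Finset.mem_cons_self a s)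
    have ihs := ih (fun i hi => h0 i (Finset.mem_cons_of_mem hi))
      (fun i hi => h1 i (Finset.mem_cons_of_mem hi))
    have hS : 0 ≤ ∑ i ∈ s, f i := Finset.sum_nonneg (fun i hi => h0 i (Finset.mem_cons_of_mem hi))
    nlinarith

lemma geom_Ico (a b : ℕ) : ∑ i ∈ Ico a b, q ^ (i + 1) ≤ q ^ (a + 1) / (1 - q) := by
  have h1q : (0:ℝ) < 1 - q := by linarith
  rcases le_or_gt b a with h | h
  · rw [Finset.Ico_eq_empty (by omega)]
    simp only [Finset.sum_empty]
    positivity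
  · rw [Finset.sum_Ico_eq_sum_range]
    have : ∀ i ∈ range (b - a), q ^ (a + i + 1) = q ^ (a + 1) * q ^ i := by
      intro i _; ring
    rw [Finset.sum_congr rfl this, ← Finset.mul_sum]
    have hg : ∑ i ∈ range (b - a), q ^ i ≤ (1 - q)⁻¹ := by
      have := Summable.sum_le_tsum (range (b - a)) (fun i _ => by positivity)
        (summable_geometric_of_lt_one hq0.le hq1)
      rwa [tsum_geometric_of_lt_one hq0.le hq1] at this
    calc q ^ (a + 1) * ∑ i ∈ range (b - a), q ^ i ≤ q ^ (a + 1) * (1 - q)⁻¹ := by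
          apply mul_le_mul_of_nonneg_left hg (by positivity)
      _ = q ^ (a + 1) / (1 - q) := by rw [div_eq_mul_inv]

omit hq0 hq1 in
lemma poch_split {a b : ℕ} (h : a ≤ b) :
    qPochFin q b = qPochFin q a * ∏ i ∈ Ico a b, (1 - q ^ (i + 1)) := by
  unfold qPochFin
  rw [Finset.prod_range_mul_prod_Ico _ h]

lemma poch_lower {a b : ℕ} (h : a ≤ b) :
    qPochFin q a * (1 - q ^ (a + 1) / (1 - q)) ≤ qPochFin q b := by
  rw [poch_split (q := q) h]
  apply mul_le_mul_of_nonneg_left _ (qPochFin_pos hq0 hq1 a).le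
  calc 1 - q ^ (a + 1) / (1 - q) ≤ 1 - ∑ i ∈ Ico a b, q ^ (i + 1) := by
        have := geom_Ico hq0 hq1 a b
        linarith
    _ ≤ ∏ i ∈ Ico a b, (1 - q ^ (i + 1)) := by
        apply weier
        · intro i _; positivity
        · intro i _
          have : q ^ (i + 1) < 1 := pow_lt_one₀ hq0.le hq1 (Nat.succ_ne_zero i)
          linarith

lemma poch_anti {a b : ℕ} (h : a ≤ b) : qPochFin q b ≤ qPochFin q a := by
  rw [poch_split (q := q) h]
  have : ∏ i ∈ Ico a b, (1 - q ^ (i + 1)) ≤ 1 := by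
    apply Finset.prod_le_one
    · intro i _
      have : q ^ (i + 1) < 1 := pow_lt_one₀ hq0.le hq1 (Nat.succ_ne_zero i)
      linarith
    · intro i _
      have : 0 ≤ q ^ (i + 1) := by positivity
      linarith
  nlinarith [qPochFin_pos hq0 hq1 a]

lemma ratio_lower {a b : ℕ} (h : a ≤ b) :
    1 - q ^ (a + 1) / (1 - q) ≤ qPochFin q b / qPochFin q a := by
  rw [le_div_iff₀ (qPochFin_pos hq0 hq1 a)]
  have := poch_lower hq0 hq1 (q := q) h
  nlinarith [this]

lemma ratio_le_one {a b : ℕ} (h : a ≤ b) : qPochFin q b / qPochFin q a ≤ 1 := by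
  rw [div_le_one (qPochFin_pos hq0 hq1 a)]
  exact poch_anti hq0 hq1 h

end aux


set_option maxHeartbeats 1000000 in
theorem sw_global_asymptotics_t_zero (q : ℝ) (hq0 : 0 < q) (hq1 : q < 1) :
    ∃ N : ℕ, ∀ n : ℕ, N ≤ n → 0 < n → ∀ z : ℂ, ‖z‖ ≤ 1 →
      ‖qPochC q n * SW q n z - qAiry q z‖ ≤
        (q ^ ((n : ℝ) / 2) / (1 - q) + (2 / (1 - q)) * (1 / 2 : ℝ) ^ (n / 2)) *
          qAiryNeg q ‖z‖ := by
  have h1q : (0:ℝ) < 1 - q := by linarith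
  -- choose K with tail ≤ 1/2
  obtain ⟨K, hK⟩ : ∃ K : ℕ, q ^ (K + 1) / (1 - q) ≤ 1 / 2 := by
    have h := tendsto_pow_atTop_nhds_zero_of_lt_one hq0.le hq1
    have h2 : ∀ᶠ k : ℕ in Filter.atTop, q ^ k ≤ (1 - q) / 2 :=
      h.eventually_le_const (show (0:ℝ) < (1 - q)/2 by positivity)
    obtain ⟨K, hK⟩ := h2.exists
    refine ⟨K, ?_⟩
    have hK1 : q ^ (K + 1) ≤ q ^ K := pow_le_pow_of_le_one hq0.le hq1.le (Nat.le_succ K)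
    rw [div_le_div_iff₀ h1q (by norm_num)]
    linarith
  set c : ℝ := qPochFin q K / 2 with hc_def
  have hc_pos : 0 < c := by
    have := qPochFin_pos hq0 hq1 (q := q) K
    positivity
  have hc_le1 : c ≤ 1 := by
    have := qPochFin_le_one hq0 hq1 (q := q) K
    rw [hc_def]; linarith
  have hpoch_ge : ∀ j, c ≤ qPochFin q j := by
    intro j
    rcases le_total j K with h | h
    · have := poch_anti hq0 hq1 (q := q) h
      rw [hc_def]
      have := qPochFin_pos hq0 hq1 (q := q) K
      linarith
    · have h2 := poch_lower hq0 hq1 (q := q) h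
      have h3 : q ^ (K + 1) / (1 - q) ≤ 1 / 2 := hK
      have h4 : qPochFin q K * (1 - q ^ (K + 1) / (1 - q)) ≥ qPochFin q K * (1/2) := by
        apply mul_le_mul_of_nonneg_left _ (qPochFin_pos hq0 hq1 K).le
        linarith
      rw [hc_def]
      calc qPochFin q K / 2 = qPochFin q K * (1/2) := by ring
        _ ≤ qPochFin q K * (1 - q ^ (K + 1) / (1 - q)) := h4
        _ ≤ qPochFin q j := h2
  -- choose M with q^k ≤ c/2 for k ≥ M
  obtain ⟨M, hM⟩ : ∃ M : ℕ, ∀ k, M ≤ k → q ^ k ≤ c / 2 := by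
    have h := tendsto_pow_atTop_nhds_zero_of_lt_one hq0.le hq1
    have h2 : ∀ᶠ k : ℕ in Filter.atTop, q ^ k ≤ c / 2 :=
      h.eventually_le_const (show (0:ℝ) < c/2 by positivity)
    obtain ⟨M, hM⟩ := Filter.eventually_atTop.mp h2
    exact ⟨M, hM⟩
  refine ⟨2 * M + 2, fun n hn hnpos z hz => ?_⟩
  set m : ℕ := n / 2 + 1 with hm_def
  have hm1 : 1 ≤ m := by omega
  have hmn : m ≤ n + 1 := by omega
  have hMm : M ≤ m := by omega
  set x : ℝ := ‖z‖ with hx_def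
  have hx0 : 0 ≤ x := norm_nonneg z
  set a : ℕ → ℝ := fun j => q ^ (j ^ 2) * x ^ j / qPochFin q j with ha_def
  set term : ℕ → ℂ := fun j => (q : ℂ) ^ (j ^ 2) * (-z) ^ j / qPochC q j with hterm_def
  have ha_nonneg : ∀ j, 0 ≤ a j := fun j => by
    have := qPochFin_pos hq0 hq1 (q := q) j
    simp only [ha_def]
    positivity
  have habs : ∀ j, ‖term j‖ = a j := by
    intro j
    simp only [hterm_def, ha_def]
    rw [norm_div, norm_mul, norm_pow, norm_pow, Complex.norm_real, Real.norm_eq_abs, abs_of_pos hq0,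
      norm_neg, abs_qPochC hq0 hq1]
  have hq2 : ∀ j : ℕ, q ^ (j ^ 2) ≤ q ^ j := fun j =>
    pow_le_pow_of_le_one hq0.le hq1.le (Nat.le_self_pow two_ne_zero j)
  have ha_le : ∀ j, a j ≤ c⁻¹ * q ^ j := by
    intro j
    simp only [ha_def]
    have hx1 : x ^ j ≤ 1 := pow_le_one₀ hx0 hz
    calc q ^ (j ^ 2) * x ^ j / qPochFin q j ≤ q ^ j * 1 / c := by
          apply div_le_div₀ (by positivity) _ hc_pos (hpoch_ge j)
          exact mul_le_mul (hq2 j) hx1 (by positivity) (by positivity)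
      _ = c⁻¹ * q ^ j := by ring
  have hgeom : Summable (fun j : ℕ => c⁻¹ * q ^ j) :=
    (summable_geometric_of_lt_one hq0.le hq1).mul_left _
  have hsum_a : Summable a := Summable.of_nonneg_of_le ha_nonneg ha_le hgeom
  have hsum_term : Summable term := by
    apply Summable.of_norm
    exact hsum_a.congr (fun j => by rw [← habs j])
  have hA_eq : qAiryNeg q x = ∑' j, a j := by simp only [qAiryNeg, ha_def]
  have hA1 : (1 : ℝ) ≤ ∑' j, a j := by
    have h0 : a 0 = 1 := by simp [ha_def, qPochFin]
    have := Summable.le_tsum hsum_a 0 (fun j _ => ha_nonneg j)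
    rw [h0] at this
    exact this
  set r : ℕ → ℝ := fun j => qPochFin q n / qPochFin q (n - j) with hr_def
  have hr_le_one : ∀ j, r j ≤ 1 := fun j => ratio_le_one hq0 hq1 (Nat.sub_le n j)
  have hr_nonneg : ∀ j, 0 ≤ r j := fun j => by
    have h1 := qPochFin_pos hq0 hq1 (q := q) n
    have h2 := qPochFin_pos hq0 hq1 (q := q) (n - j)
    simp only [hr_def]
    positivity
  have hSW : qPochC q n * SW q n z = ∑ j ∈ range (n + 1), term j * ((r j : ℝ) : ℂ) := by
    rw [SW, Finset.mul_sum]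
    refine Finset.sum_congr rfl (fun j hj => ?_)
    simp only [hterm_def, hr_def]
    rw [qPochC_eq (q := q) n, qPochC_eq (q := q) j, qPochC_eq (q := q) (n - j)]
    have h1 : (qPochFin q j : ℂ) ≠ 0 := by exact_mod_cast (qPochFin_pos hq0 hq1 j).ne'
    have h2 : (qPochFin q (n - j) : ℂ) ≠ 0 := by
      exact_mod_cast (qPochFin_pos hq0 hq1 (n - j)).ne'
    push_cast
    field_simp
  have hAiry : qAiry q z = (∑ j ∈ range (n + 1), term j) + ∑' k, term (k + (n + 1)) :=
    (Summable.sum_add_tsum_nat_add (n + 1) hsum_term).symm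
  have key : qPochC q n * SW q n z - qAiry q z
      = (∑ j ∈ range (n + 1), term j * (((r j : ℝ) : ℂ) - 1)) - ∑' k, term (k + (n + 1)) := by
    rw [hSW, hAiry]
    have h3 : ∑ j ∈ range (n + 1), term j * (((r j : ℝ) : ℂ) - 1)
        = (∑ j ∈ range (n + 1), term j * ((r j : ℝ) : ℂ)) - ∑ j ∈ range (n + 1), term j := by
      rw [← Finset.sum_sub_distrib]
      exact Finset.sum_congr rfl (fun j _ => by ring)
    rw [h3]
    ring
  have hsum_shift : Summable (fun k => a (k + (n + 1))) := (summable_nat_add_iff (n + 1)).2 hsum_a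
  have habs_bound : ‖qPochC q n * SW q n z - qAiry q z‖
      ≤ (∑ j ∈ range (n + 1), a j * (1 - r j)) + ∑' k, a (k + (n + 1)) := by
    rw [key]
    refine (norm_sub_le _ _).trans (add_le_add ?_ ?_)
    · refine (norm_sum_le _ _).trans ?_
      apply Finset.sum_le_sum
      intro j hj
      rw [norm_mul, habs j]
      have h4 : ‖((r j : ℝ) : ℂ) - 1‖ = 1 - r j := by
        rw [show (((r j : ℝ) : ℂ) - 1) = ((r j - 1 : ℝ) : ℂ) by push_cast; ring,
          Complex.norm_real, Real.norm_eq_abs, abs_of_nonpos (by linarith [hr_le_one j]), neg_sub]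
      rw [h4]
    · refine (norm_tsum_le_tsum_norm ?_).trans (le_of_eq (tsum_congr fun k => by
        rw [habs]))
      exact hsum_shift.congr (fun k => by rw [← habs])
  -- piece 1 bound
  have hB1 : ∀ j < m, 1 - r j ≤ q ^ ((n : ℝ) / 2) / (1 - q) := by
    intro j hj
    have hjn2 : j ≤ n / 2 := by omega
    have hjn : j ≤ n := by omega
    have h1 : 1 - q ^ ((n - j) + 1) / (1 - q) ≤ r j := ratio_lower hq0 hq1 (Nat.sub_le n j)
    have h2 : q ^ ((n - j) + 1) ≤ q ^ ((n : ℝ) / 2) := by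
      rw [← Real.rpow_natCast q ((n - j) + 1)]
      apply Real.rpow_le_rpow_of_exponent_ge hq0 hq1.le
      push_cast [Nat.cast_sub hjn]
      have h3 : (j : ℝ) ≤ ((n / 2 : ℕ) : ℝ) := by exact_mod_cast hjn2
      have h4 : ((n / 2 : ℕ) : ℝ) ≤ (n : ℝ) / 2 := Nat.cast_div_le
      linarith
    have h5 : q ^ ((n - j) + 1) / (1 - q) ≤ q ^ ((n : ℝ) / 2) / (1 - q) :=
      (div_le_div_iff_of_pos_right h1q).mpr h2
    linarith
  have hpiece1 : ∑ j ∈ range m, a j * (1 - r j) ≤ q ^ ((n : ℝ) / 2) / (1 - q) * ∑' j, a j := by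
    have hrp : (0 : ℝ) ≤ q ^ ((n : ℝ) / 2) / (1 - q) := by positivity
    calc ∑ j ∈ range m, a j * (1 - r j)
        ≤ ∑ j ∈ range m, a j * (q ^ ((n : ℝ) / 2) / (1 - q)) := by
          apply Finset.sum_le_sum
          intro j hj
          exact mul_le_mul_of_nonneg_left (hB1 j (mem_range.mp hj)) (ha_nonneg j)
      _ = (∑ j ∈ range m, a j) * (q ^ ((n : ℝ) / 2) / (1 - q)) := by rw [← Finset.sum_mul]
      _ ≤ (∑' j, a j) * (q ^ ((n : ℝ) / 2) / (1 - q)) :=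
          mul_le_mul_of_nonneg_right (Summable.sum_le_tsum _ (fun j _ => ha_nonneg j) hsum_a) hrp
      _ = q ^ ((n : ℝ) / 2) / (1 - q) * ∑' j, a j := by ring
  -- tail-type bounds
  have hkey_tail : ∀ j, m ≤ j → a j ≤ q ^ (m ^ 2) / c * q ^ (j - m) := by
    intro j hmj
    have hx1 : x ^ j ≤ 1 := pow_le_one₀ hx0 hz
    have hexp : m ^ 2 + (j - m) ≤ j ^ 2 := by
      have hjd : j = m + (j - m) := by omega
      have h1 : j - m ≤ 2 * m * (j - m) := Nat.le_mul_of_pos_left (j - m) (by omega)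
      calc m ^ 2 + (j - m) ≤ m ^ 2 + 2 * m * (j - m) + (j - m) ^ 2 := by nlinarith
        _ = (m + (j - m)) ^ 2 := by ring
        _ = j ^ 2 := by rw [← hjd]
    have hq' : q ^ (j ^ 2) ≤ q ^ (m ^ 2) * q ^ (j - m) := by
      rw [← pow_add]
      exact pow_le_pow_of_le_one hq0.le hq1.le hexp
    calc a j ≤ q ^ (j ^ 2) / c := by
          simp only [ha_def]
          apply div_le_div₀ (by positivity) _ hc_pos (hpoch_ge j)
          nlinarith [pow_nonneg hq0.le (j ^ 2), pow_nonneg hx0 j]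
      _ ≤ (q ^ (m ^ 2) * q ^ (j - m)) / c := by gcongr
      _ = q ^ (m ^ 2) / c * q ^ (j - m) := by ring
  have hb_sum : Summable (fun k : ℕ => q ^ (m ^ 2) / c * q ^ k) :=
    (summable_geometric_of_lt_one hq0.le hq1).mul_left _
  have hb_tsum : ∑' k : ℕ, q ^ (m ^ 2) / c * q ^ k = q ^ (m ^ 2) / c * (1 - q)⁻¹ := by
    rw [tsum_mul_left, tsum_geometric_of_lt_one hq0.le hq1]
  have hpiece2 : ∑ j ∈ Ico m (n + 1), a j * (1 - r j) ≤ q ^ (m ^ 2) / c * (1 - q)⁻¹ := by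
    calc ∑ j ∈ Ico m (n + 1), a j * (1 - r j) ≤ ∑ j ∈ Ico m (n + 1), a j := by
          apply Finset.sum_le_sum
          intro j hj
          nlinarith [ha_nonneg j, hr_nonneg j, hr_le_one j]
      _ ≤ ∑ j ∈ Ico m (n + 1), q ^ (m ^ 2) / c * q ^ (j - m) := by
          apply Finset.sum_le_sum
          intro j hj
          exact hkey_tail j (Finset.mem_Ico.mp hj).1
      _ = ∑ k ∈ range (n + 1 - m), q ^ (m ^ 2) / c * q ^ k := by
          rw [Finset.sum_Ico_eq_sum_range]
          exact Finset.sum_congr rfl (fun k _ => by rw [Nat.add_sub_cancel_left])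
      _ ≤ ∑' k : ℕ, q ^ (m ^ 2) / c * q ^ k := Summable.sum_le_tsum _ (fun k _ => by positivity) hb_sum
      _ = q ^ (m ^ 2) / c * (1 - q)⁻¹ := hb_tsum
  have hpiece3 : ∑' k, a (k + (n + 1)) ≤ q ^ (m ^ 2) / c * (1 - q)⁻¹ := by
    have h1 : ∀ k, a (k + (n + 1)) ≤ q ^ (m ^ 2) / c * q ^ k := by
      intro k
      have hmk : m ≤ k + (n + 1) := by omega
      refine (hkey_tail _ hmk).trans ?_
      apply mul_le_mul_of_nonneg_left _ (by positivity)
      exact pow_le_pow_of_le_one hq0.le hq1.le (by omega)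
    calc ∑' k, a (k + (n + 1)) ≤ ∑' k : ℕ, q ^ (m ^ 2) / c * q ^ k :=
          Summable.tsum_le_tsum h1 hsum_shift hb_sum
      _ = q ^ (m ^ 2) / c * (1 - q)⁻¹ := hb_tsum
  -- smallness of the geometric factor
  have hq_m : q ^ (m ^ 2) / c ≤ (1 / 2 : ℝ) ^ m := by
    have h1 : q ^ m ≤ c / 2 := hM m hMm
    have h2 : q ^ (m ^ 2) = (q ^ m) ^ m := by rw [← pow_mul, sq]
    have h3 : (q ^ m) ^ m ≤ (c / 2) ^ m := pow_le_pow_left₀ (by positivity) h1 m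
    have h5 : c ^ m ≤ c := pow_le_of_le_one hc_pos.le hc_le1 (by omega)
    rw [div_le_iff₀ hc_pos]
    calc q ^ (m ^ 2) ≤ (c / 2) ^ m := by rw [h2]; exact h3
      _ = c ^ m * (1 / 2 : ℝ) ^ m := by rw [show c / 2 = c * (1 / 2) by ring, mul_pow]
      _ ≤ c * (1 / 2 : ℝ) ^ m := mul_le_mul_of_nonneg_right h5 (by positivity)
      _ = (1 / 2 : ℝ) ^ m * c := by ring
  have hhalf : ((1 : ℝ) / 2) ^ m = (1 / 2 : ℝ) ^ (n / 2) * (1 / 2) := pow_succ _ _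
  -- final assembly
  have hsplit : ∑ j ∈ range (n + 1), a j * (1 - r j)
      = (∑ j ∈ range m, a j * (1 - r j)) + ∑ j ∈ Ico m (n + 1), a j * (1 - r j) :=
    (Finset.sum_range_add_sum_Ico _ hmn).symm
  have hT2 : (0 : ℝ) ≤ (1 / 2 : ℝ) ^ (n / 2) := by positivity
  have hgm : (0 : ℝ) ≤ q ^ (m ^ 2) / c * (1 - q)⁻¹ := by positivity
  calc ‖qPochC q n * SW q n z - qAiry q z‖
      ≤ (∑ j ∈ range (n + 1), a j * (1 - r j)) + ∑' k, a (k + (n + 1)) := habs_bound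
    _ = (∑ j ∈ range m, a j * (1 - r j)) + (∑ j ∈ Ico m (n + 1), a j * (1 - r j))
        + ∑' k, a (k + (n + 1)) := by rw [hsplit]
    _ ≤ q ^ ((n : ℝ) / 2) / (1 - q) * (∑' j, a j)
        + (q ^ (m ^ 2) / c * (1 - q)⁻¹ + q ^ (m ^ 2) / c * (1 - q)⁻¹) := by
        have := add_le_add (add_le_add hpiece1 hpiece2) hpiece3
        linarith
    _ ≤ q ^ ((n : ℝ) / 2) / (1 - q) * (∑' j, a j)
        + 2 / (1 - q) * (1 / 2 : ℝ) ^ (n / 2) * (∑' j, a j) := by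
        have h6 : q ^ (m ^ 2) / c * (1 - q)⁻¹ ≤ (1 / 2 : ℝ) ^ m * (1 - q)⁻¹ :=
          mul_le_mul_of_nonneg_right hq_m (by positivity)
        have h7 : (1 / 2 : ℝ) ^ m * (1 - q)⁻¹ = (1 / 2 : ℝ) ^ (n / 2) * (1 - q)⁻¹ * (1 / 2) := by
          rw [hhalf]; ring
        have h8 : 2 / (1 - q) * (1 / 2 : ℝ) ^ (n / 2) * 1
            ≤ 2 / (1 - q) * (1 / 2 : ℝ) ^ (n / 2) * (∑' j, a j) := by
          apply mul_le_mul_of_nonneg_left hA1 (by positivity)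
        have heq : 2 / (1 - q) * (1 / 2 : ℝ) ^ (n / 2) * 1
            = 2 * ((1 / 2 : ℝ) ^ (n / 2) * (1 - q)⁻¹) := by
          field_simp
        have hXnn : (0 : ℝ) ≤ (1 / 2 : ℝ) ^ (n / 2) * (1 - q)⁻¹ := by positivity
        linarith
    _ = (q ^ ((n : ℝ) / 2) / (1 - q) + 2 / (1 - q) * (1 / 2 : ℝ) ^ (n / 2)) * ∑' j, a j := by
        ring
    _ = (q ^ ((n : ℝ) / 2) / (1 - q) + 2 / (1 - q) * (1 / 2 : ℝ) ^ (n / 2))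
        * qAiryNeg q ‖z‖ := by
        rw [show qAiryNeg q ‖z‖ = ∑' j, a j from hA_eq]
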